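/- Let {X,U,V,Y} be a basis of ℝ^4 and let c ∈ ℝ. Let g be the symmetric bilinear form on ℝ^4 with g(X,X) = c, g(X,Y) = 1, g(U,V) = 1, and all other products of distinct pairs of basis vectors (and all other diagonal values) equal to 0. Let ∇R be the 5-linear form on ℝ^4 whose only nonzero components on the basis, up to the symmetries ∇R(x_1,x_2,x_3,x_4;x_5) = −∇R(x_2,x_1,x_3,x_4;x_5) = −∇R(x_1,x_2,x_4,x_3;x_5) = ∇R(x_3,x_4,x_1,x_2;x_5), are ∇R(X,U,U,X;U) = 1. Then: (i) g is nondegenerate of signature (2,2); (ii) the Szabó operator satisfies 𝒮(ξ)² = 0 for every ξ ∈ ℝ^4; (iii) there exists ξ_0 ∈ ℝ^4 with 𝒮(ξ_0) ≠ 0. -/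

import Mathlib

/-- for the inner product with `g(X,X) = c`, `g(X,Y) = g(U,V) = 1` on `ℝ⁴`
and the 5-linear form with `∇R(X,U,U,X;U) = 1` as its only nonzero component up to the
usual symmetries, `g` has signature `(2,2)` and the Szabó operator `𝒮(ξ)`, defined by
`g(𝒮(ξ)y,z) = ∇R(y,ξ,ξ,z;ξ)`, satisfies `𝒮(ξ)² = 0` for all `ξ` and `𝒮(ξ₀) ≠ 0` for
some `ξ₀`. -/
theorem szabo_nilpotent_order_two_R4
    (b : Module.Basis (Fin 4) ℝ (Fin 4 → ℝ)) (c : ℝ)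
    (g : (Fin 4 → ℝ) →ₗ[ℝ] (Fin 4 → ℝ) →ₗ[ℝ] ℝ)
    (hgsym : ∀ v w, g v w = g w v)
    (hgXX : g (b 0) (b 0) = c)
    (hgXY : g (b 0) (b 3) = 1)
    (hgUV : g (b 1) (b 2) = 1)
    (hg0 : ∀ i j : Fin 4,
      ¬((i = 0 ∧ j = 0) ∨ (i = 0 ∧ j = 3) ∨ (i = 3 ∧ j = 0) ∨
        (i = 1 ∧ j = 2) ∨ (i = 2 ∧ j = 1)) →
      g (b i) (b j) = 0)
    (dR : MultilinearMap ℝ (fun _ : Fin 5 => (Fin 4 → ℝ)) ℝ)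
    (hsym1 : ∀ x₁ x₂ x₃ x₄ x₅, dR ![x₁, x₂, x₃, x₄, x₅] = -dR ![x₂, x₁, x₃, x₄, x₅])
    (hsym2 : ∀ x₁ x₂ x₃ x₄ x₅, dR ![x₁, x₂, x₃, x₄, x₅] = -dR ![x₁, x₂, x₄, x₃, x₅])
    (hsym3 : ∀ x₁ x₂ x₃ x₄ x₅, dR ![x₁, x₂, x₃, x₄, x₅] = dR ![x₃, x₄, x₁, x₂, x₅])
    (hval : dR ![b 0, b 1, b 1, b 0, b 1] = 1)
    (hvanish : ∀ i₁ i₂ i₃ i₄ i₅ : Fin 4,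
      ¬(((i₁ = 0 ∧ i₂ = 1) ∨ (i₁ = 1 ∧ i₂ = 0)) ∧
        ((i₃ = 1 ∧ i₄ = 0) ∨ (i₃ = 0 ∧ i₄ = 1)) ∧ i₅ = 1) →
      dR ![b i₁, b i₂, b i₃, b i₄, b i₅] = 0) :
    (∃ e : Module.Basis (Fin 2 ⊕ Fin 2) ℝ (Fin 4 → ℝ), ∀ i j,
      g (e i) (e j) =
        if i = j then Sum.elim (fun _ => (1 : ℝ)) (fun _ => (-1 : ℝ)) i else 0) ∧
    (∀ v, (∀ w, g v w = 0) → v = 0) ∧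
    (∀ S : (Fin 4 → ℝ) → Module.End ℝ (Fin 4 → ℝ),
      (∀ ξ y z, g (S ξ y) z = dR ![y, ξ, ξ, z, ξ]) →
      (∀ ξ, S ξ ^ 2 = 0) ∧ ∃ ξ₀, S ξ₀ ≠ 0) := by
  -- the g-table
  have gtab : ∀ i j : Fin 4, g (b i) (b j) =
      ![![c,0,0,1],![0,0,1,0],![0,1,0,0],![1,0,0,0]] i j := by
    intro i j
    fin_cases i <;> fin_cases j <;>
      simp only [Matrix.cons_val_zero, Matrix.cons_val_one, Matrix.head_cons,
        Matrix.cons_val_two, Matrix.cons_val_three, Matrix.tail_cons, Matrix.head_fin_const] <;>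
      first
        | exact hgXX
        | exact hgXY
        | exact hgUV
        | (rw [hgsym]; first | exact hgXY | exact hgUV)
        | exact hg0 _ _ (by decide)
  set rp : (Fin 4 → ℝ) → Fin 4 → ℝ := fun w i => b.repr w i with hrp
  have hgf : ∀ v w, g v w = c * rp v 0 * rp w 0 + rp v 0 * rp w 3 + rp v 3 * rp w 0
      + rp v 1 * rp w 2 + rp v 2 * rp w 1 := by
    intro v w
    conv_lhs => rw [← b.sum_repr v, ← b.sum_repr w]
    simp only [map_sum, map_smul, LinearMap.sum_apply, LinearMap.smul_apply, smul_eq_mul]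
    rw [Fin.sum_univ_four]
    simp only [Fin.sum_univ_four, gtab]
    simp only [Matrix.cons_val_zero, Matrix.cons_val_one, Matrix.head_cons,
      Matrix.cons_val_two, Matrix.cons_val_three, Matrix.tail_cons]
    ring
  -- values of dR on basis tuples
  have ht2 : dR ![b 1, b 0, b 1, b 0, b 1] = -1 := by
    rw [show dR ![b 1, b 0, b 1, b 0, b 1] = -dR ![b 0, b 1, b 1, b 0, b 1] from hsym1 _ _ _ _ _,
      hval]
  have ht3 : dR ![b 0, b 1, b 0, b 1, b 1] = -1 := by
    rw [show dR ![b 0, b 1, b 0, b 1, b 1] = -dR ![b 0, b 1, b 1, b 0, b 1] from hsym2 _ _ _ _ _,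
      hval]
  have ht4 : dR ![b 1, b 0, b 0, b 1, b 1] = 1 := by
    rw [show dR ![b 1, b 0, b 0, b 1, b 1] = -dR ![b 0, b 1, b 0, b 1, b 1] from hsym1 _ _ _ _ _,
      ht3]
    norm_num
  have hvalr : ∀ r : Fin 5 → Fin 4, dR (fun i => b (r i)) =
      (if r = ![0,1,1,0,1] then (1:ℝ) else 0) - (if r = ![1,0,1,0,1] then 1 else 0)
      - (if r = ![0,1,0,1,1] then 1 else 0) + (if r = ![1,0,0,1,1] then 1 else 0) := by
    intro r
    by_cases h1 : r = ![0,1,1,0,1]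
    · subst h1
      rw [show (fun i => b (![0,1,1,0,1] i)) = ![b 0, b 1, b 1, b 0, b 1] from
        funext fun i => by fin_cases i <;> rfl]
      rw [hval]
      norm_num [(by decide : ((![0,1,1,0,1] : Fin 5 → Fin 4) = ![1,0,1,0,1]) = False),
        (by decide : ((![0,1,1,0,1] : Fin 5 → Fin 4) = ![0,1,0,1,1]) = False),
        (by decide : ((![0,1,1,0,1] : Fin 5 → Fin 4) = ![1,0,0,1,1]) = False)]
    by_cases h2 : r = ![1,0,1,0,1]
    · subst h2
      rw [show (fun i => b (![1,0,1,0,1] i)) = ![b 1, b 0, b 1, b 0, b 1] from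
        funext fun i => by fin_cases i <;> rfl]
      rw [ht2]
      norm_num [(by decide : ((![1,0,1,0,1] : Fin 5 → Fin 4) = ![0,1,1,0,1]) = False),
        (by decide : ((![1,0,1,0,1] : Fin 5 → Fin 4) = ![0,1,0,1,1]) = False),
        (by decide : ((![1,0,1,0,1] : Fin 5 → Fin 4) = ![1,0,0,1,1]) = False)]
    by_cases h3 : r = ![0,1,0,1,1]
    · subst h3
      rw [show (fun i => b (![0,1,0,1,1] i)) = ![b 0, b 1, b 0, b 1, b 1] from
        funext fun i => by fin_cases i <;> rfl]
      rw [ht3]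
      norm_num [(by decide : ((![0,1,0,1,1] : Fin 5 → Fin 4) = ![0,1,1,0,1]) = False),
        (by decide : ((![0,1,0,1,1] : Fin 5 → Fin 4) = ![1,0,1,0,1]) = False),
        (by decide : ((![0,1,0,1,1] : Fin 5 → Fin 4) = ![1,0,0,1,1]) = False)]
    by_cases h4 : r = ![1,0,0,1,1]
    · subst h4
      rw [show (fun i => b (![1,0,0,1,1] i)) = ![b 1, b 0, b 0, b 1, b 1] from
        funext fun i => by fin_cases i <;> rfl]
      rw [ht4]
      norm_num [(by decide : ((![1,0,0,1,1] : Fin 5 → Fin 4) = ![0,1,1,0,1]) = False),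
        (by decide : ((![1,0,0,1,1] : Fin 5 → Fin 4) = ![1,0,1,0,1]) = False),
        (by decide : ((![1,0,0,1,1] : Fin 5 → Fin 4) = ![0,1,0,1,1]) = False)]
    rw [if_neg h1, if_neg h2, if_neg h3, if_neg h4]
    rw [show (fun i => b (r i)) = ![b (r 0), b (r 1), b (r 2), b (r 3), b (r 4)] from
      funext fun i => by fin_cases i <;> rfl]
    rw [hvanish _ _ _ _ _ ?_]
    · norm_num
    rintro ⟨h12, h34, h5⟩
    rcases h12 with ⟨ha, hb⟩ | ⟨ha, hb⟩ <;> rcases h34 with ⟨hc, hd⟩ | ⟨hc, hd⟩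
    · exact h1 (funext fun i => by fin_cases i <;> simp [ha, hb, hc, hd, h5])
    · exact h3 (funext fun i => by fin_cases i <;> simp [ha, hb, hc, hd, h5])
    · exact h2 (funext fun i => by fin_cases i <;> simp [ha, hb, hc, hd, h5])
    · exact h4 (funext fun i => by fin_cases i <;> simp [ha, hb, hc, hd, h5])
  have hD : ∀ m : Fin 5 → (Fin 4 → ℝ), dR m =
      ∑ r : Fin 5 → Fin 4, (∏ i, rp (m i) (r i)) * dR (fun i => b (r i)) := by
    intro m
    conv_lhs => rw [show m = fun i => ∑ j, rp (m i) j • b j from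
      funext fun i => (b.sum_repr (m i)).symm]
    rw [MultilinearMap.map_sum]
    refine Finset.sum_congr rfl fun r _ => ?_
    rw [MultilinearMap.map_smul_univ, smul_eq_mul]
  have hkey : ∀ y ξ z : Fin 4 → ℝ, dR ![y, ξ, ξ, z, ξ] =
      rp ξ 1 * (rp ξ 1 * rp y 0 - rp ξ 0 * rp y 1) * (rp ξ 1 * rp z 0 - rp ξ 0 * rp z 1) := by
    intro y ξ z
    rw [hD]
    simp only [hvalr, mul_sub, mul_add, mul_ite, mul_one, mul_zero]
    rw [Finset.sum_add_distrib, Finset.sum_sub_distrib, Finset.sum_sub_distrib]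
    simp only [Finset.sum_ite_eq' Finset.univ, Finset.mem_univ, if_true]
    rw [Fin.prod_univ_five, Fin.prod_univ_five, Fin.prod_univ_five, Fin.prod_univ_five]
    simp only [Matrix.cons_val_zero, Matrix.cons_val_one, Matrix.head_cons,
      Matrix.cons_val_two, Matrix.cons_val_three, Matrix.cons_val_four, Matrix.tail_cons,
      Matrix.head_fin_const]
    ring
  have hrb : ∀ i j : Fin 4, rp (b i) j = if i = j then 1 else 0 := by
    intro i j
    simp [hrp, Module.Basis.repr_self, Finsupp.single_apply]
  have hc0 : ∀ v, g v (b 3) = rp v 0 := by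
    intro v; rw [hgf]; simp [hrb]
  have hc1 : ∀ v, g v (b 2) = rp v 1 := by
    intro v; rw [hgf]; simp [hrb]
  have hc2 : ∀ v, g v (b 1) = rp v 2 := by
    intro v; rw [hgf]; simp [hrb]
  have hc3 : ∀ v, g v (b 0) = c * rp v 0 + rp v 3 := by
    intro v; rw [hgf]; simp [hrb]
  have hnd : ∀ v, (∀ w, g v w = 0) → v = 0 := by
    intro v hv
    have e0 : rp v 0 = 0 := by rw [← hc0]; exact hv _
    have e1 : rp v 1 = 0 := by rw [← hc1]; exact hv _
    have e2 : rp v 2 = 0 := by rw [← hc2]; exact hv _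
    have e3 : rp v 3 = 0 := by
      have := hv (b 0); rw [hc3, e0] at this; linarith
    refine b.ext_elem fun i => ?_
    fin_cases i <;> simp only [map_zero, Finsupp.coe_zero, Pi.zero_apply] <;> assumption
  refine ⟨?_, hnd, ?_⟩
  · -- signature (2,2)
    have g00 : g (b 0) (b 0) = c := hgXX
    have g03 : g (b 0) (b 3) = 1 := hgXY
    have g30 : g (b 3) (b 0) = 1 := by rw [hgsym]; exact hgXY
    have g12 : g (b 1) (b 2) = 1 := hgUV
    have g21 : g (b 2) (b 1) = 1 := by rw [hgsym]; exact hgUV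
    have g33 : g (b 3) (b 3) = 0 := hg0 _ _ (by decide)
    have g11 : g (b 1) (b 1) = 0 := hg0 _ _ (by decide)
    have g22 : g (b 2) (b 2) = 0 := hg0 _ _ (by decide)
    have g01 : g (b 0) (b 1) = 0 := hg0 _ _ (by decide)
    have g10 : g (b 1) (b 0) = 0 := hg0 _ _ (by decide)
    have g02 : g (b 0) (b 2) = 0 := hg0 _ _ (by decide)
    have g20 : g (b 2) (b 0) = 0 := hg0 _ _ (by decide)
    have g13 : g (b 1) (b 3) = 0 := hg0 _ _ (by decide)
    have g31 : g (b 3) (b 1) = 0 := hg0 _ _ (by decide)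
    have g23 : g (b 2) (b 3) = 0 := hg0 _ _ (by decide)
    have g32 : g (b 3) (b 2) = 0 := hg0 _ _ (by decide)
    set F : (Fin 4 → ℝ) →ₗ[ℝ] (Fin 4 → ℝ) :=
      b.constr ℝ ![b 0 + ((1-c)/2) • b 3, (1/2 : ℝ) • b 1 + b 2,
        b 0 + ((-1-c)/2) • b 3, (1/2 : ℝ) • b 1 - b 2] with hF
    set G : (Fin 4 → ℝ) →ₗ[ℝ] (Fin 4 → ℝ) :=
      b.constr ℝ ![(1-(1-c)/2) • b 0 + ((1-c)/2) • b 2, b 1 + b 3,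
        (1/2 : ℝ) • b 1 - (1/2 : ℝ) • b 3, b 0 - b 2] with hG
    have hFG' : ∀ i : Fin 4, F (G (b i)) = b i := by
      intro i
      fin_cases i
      · show F (G (b 0)) = b 0
        rw [hF, hG]
        simp only [Module.Basis.constr_basis, map_add, map_smul, map_sub, Matrix.cons_val_zero,
          Matrix.cons_val_one, Matrix.head_cons, Matrix.cons_val_two, Matrix.cons_val_three,
          Matrix.tail_cons]
        module
      · show F (G (b 1)) = b 1
        rw [hF, hG]
        simp only [Module.Basis.constr_basis, map_add, map_smul, map_sub, Matrix.cons_val_zero,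
          Matrix.cons_val_one, Matrix.head_cons, Matrix.cons_val_two, Matrix.cons_val_three,
          Matrix.tail_cons]
        module
      · show F (G (b 2)) = b 2
        rw [hF, hG]
        simp only [Module.Basis.constr_basis, map_add, map_smul, map_sub, Matrix.cons_val_zero,
          Matrix.cons_val_one, Matrix.head_cons, Matrix.cons_val_two, Matrix.cons_val_three,
          Matrix.tail_cons]
        module
      · show F (G (b 3)) = b 3
        rw [hF, hG]
        simp only [Module.Basis.constr_basis, map_add, map_smul, map_sub, Matrix.cons_val_zero,
          Matrix.cons_val_one, Matrix.head_cons, Matrix.cons_val_two, Matrix.cons_val_three,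
          Matrix.tail_cons]
        module
    have hGF' : ∀ i : Fin 4, G (F (b i)) = b i := by
      intro i
      fin_cases i
      · show G (F (b 0)) = b 0
        rw [hF, hG]
        simp only [Module.Basis.constr_basis, map_add, map_smul, map_sub, Matrix.cons_val_zero,
          Matrix.cons_val_one, Matrix.head_cons, Matrix.cons_val_two, Matrix.cons_val_three,
          Matrix.tail_cons]
        module
      · show G (F (b 1)) = b 1
        rw [hF, hG]
        simp only [Module.Basis.constr_basis, map_add, map_smul, map_sub, Matrix.cons_val_zero,
          Matrix.cons_val_one, Matrix.head_cons, Matrix.cons_val_two, Matrix.cons_val_three,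
          Matrix.tail_cons]
        module
      · show G (F (b 2)) = b 2
        rw [hF, hG]
        simp only [Module.Basis.constr_basis, map_add, map_smul, map_sub, Matrix.cons_val_zero,
          Matrix.cons_val_one, Matrix.head_cons, Matrix.cons_val_two, Matrix.cons_val_three,
          Matrix.tail_cons]
        module
      · show G (F (b 3)) = b 3
        rw [hF, hG]
        simp only [Module.Basis.constr_basis, map_add, map_smul, map_sub, Matrix.cons_val_zero,
          Matrix.cons_val_one, Matrix.head_cons, Matrix.cons_val_two, Matrix.cons_val_three,
          Matrix.tail_cons]
        module
    have hFG : F.comp G = LinearMap.id := b.ext fun i => hFG' i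
    have hGF : G.comp F = LinearMap.id := b.ext fun i => hGF' i
    set E : (Fin 4 → ℝ) ≃ₗ[ℝ] (Fin 4 → ℝ) := LinearEquiv.ofLinear F G hFG hGF with hE
    have ε : Fin 4 ≃ Fin 2 ⊕ Fin 2 := (finSumFinEquiv (m := 2) (n := 2)).symm
    refine ⟨(b.map E).reindex ((finSumFinEquiv (m := 2) (n := 2)).symm : Fin (2+2) ≃ Fin 2 ⊕ Fin 2), ?_⟩
    have he : ∀ i : Fin 2 ⊕ Fin 2,
        ((b.map E).reindex ((finSumFinEquiv (m := 2) (n := 2)).symm : Fin (2+2) ≃ Fin 2 ⊕ Fin 2)) i = F (b (finSumFinEquiv i)) := by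
      intro i
      simp [Module.Basis.reindex_apply, Module.Basis.map_apply, hE, LinearEquiv.ofLinear_apply]
    have he1 : ((b.map E).reindex ((finSumFinEquiv (m := 2) (n := 2)).symm : Fin (2+2) ≃ Fin 2 ⊕ Fin 2)) (Sum.inl 0) = b 0 + ((1-c)/2) • b 3 := by
      rw [he]
      rw [show finSumFinEquiv (Sum.inl (0 : Fin 2)) = (0 : Fin 4) from rfl]
      simp [hF, Module.Basis.constr_basis]
    have he2 : ((b.map E).reindex ((finSumFinEquiv (m := 2) (n := 2)).symm : Fin (2+2) ≃ Fin 2 ⊕ Fin 2)) (Sum.inl 1) = (1/2 : ℝ) • b 1 + b 2 := by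
      rw [he]
      rw [show finSumFinEquiv (Sum.inl (1 : Fin 2)) = (1 : Fin 4) from rfl]
      simp [hF, Module.Basis.constr_basis]
    have hf1 : ((b.map E).reindex ((finSumFinEquiv (m := 2) (n := 2)).symm : Fin (2+2) ≃ Fin 2 ⊕ Fin 2)) (Sum.inr 0) = b 0 + ((-1-c)/2) • b 3 := by
      rw [he]
      rw [show finSumFinEquiv (Sum.inr (0 : Fin 2)) = (2 : Fin 4) from rfl]
      simp [hF, Module.Basis.constr_basis]
    have hf2 : ((b.map E).reindex ((finSumFinEquiv (m := 2) (n := 2)).symm : Fin (2+2) ≃ Fin 2 ⊕ Fin 2)) (Sum.inr 1) = (1/2 : ℝ) • b 1 - b 2 := by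
      rw [he]
      rw [show finSumFinEquiv (Sum.inr (1 : Fin 2)) = (3 : Fin 4) from rfl]
      simp [hF, Module.Basis.constr_basis]
    have hcases : ∀ i : Fin 2 ⊕ Fin 2,
        i = Sum.inl 0 ∨ i = Sum.inl 1 ∨ i = Sum.inr 0 ∨ i = Sum.inr 1 := by decide
    intro i j
    rcases hcases i with rfl | rfl | rfl | rfl <;> rcases hcases j with rfl | rfl | rfl | rfl <;>
      simp only [he1, he2, hf1, hf2, map_add, map_smul, map_sub, LinearMap.add_apply,
        LinearMap.smul_apply, LinearMap.sub_apply, smul_eq_mul, g00, g03, g30, g12, g21,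
        g33, g11, g22, g01, g10, g02, g20, g13, g31, g23, g32, Sum.elim_inl, Sum.elim_inr,
        reduceCtorEq, if_false] <;>
      first
        | (norm_num; try ring)
        | ring
  · intro S hS
    constructor
    · intro ξ
      have hz : ∀ y, S ξ (S ξ y) = 0 := by
        intro y
        apply hnd
        intro w
        rw [hS, hkey]
        have z0 : rp (S ξ y) 0 = 0 := by
          rw [← hc0, hS, hkey]
          simp [hrb]
        have z1 : rp (S ξ y) 1 = 0 := by
          rw [← hc1, hS, hkey]
          simp [hrb]
        rw [z0, z1]
        ring
      apply LinearMap.ext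
      intro y
      rw [pow_two, Module.End.mul_apply, hz y, LinearMap.zero_apply]
    · refine ⟨b 1, fun h => ?_⟩
      have h1 : g (S (b 1) (b 0)) (b 0) = 1 := by rw [hS]; exact hval
      rw [h, LinearMap.zero_apply, map_zero, LinearMap.zero_apply] at h1
      exact zero_ne_one h1
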